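/- For every ℓ ∈ ℕ₀ and every k ∈ {1, …, 2^ℓ}, the squared Schauder increments sum to the dyadic step size: (Δ^{(0,1)}_{k,ℓ})² + Σ_{i=1}^{ℓ} Σ_{j=1}^{2^{i-1}} (Δ^{(i,j)}_{k,ℓ})² = 2^{-ℓ}. -/

import Mathlib

open MeasureTheory

/-- The Haar functions on `[0,1]`: `haar 0 j = 1` (only `j = 1` is used), and for `i ≥ 1`,
`haar i j = 2^((i-1)/2) * (1_{I^{(i,j)}} - 1_{J^{(i,j)}})`. -/
noncomputable def haar : ℕ → ℕ → ℝ → ℝ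
  | 0, _, _ => 1
  | (i + 1), j, t =>
      2 ^ ((i : ℝ) / 2) *
        ((Set.Ico (((j : ℝ) - 1) / 2 ^ i) (((j : ℝ) - 1 / 2) / 2 ^ i)).indicator
            (fun _ => (1 : ℝ)) t
          - (Set.Ico (((j : ℝ) - 1 / 2) / 2 ^ i) ((j : ℝ) / 2 ^ i)).indicator
            (fun _ => (1 : ℝ)) t)

/-- The Schauder functions `s^{(i,j)}(t) = ∫_0^t h^{(i,j)}(u) du`. -/
noncomputable def schauder (i j : ℕ) (t : ℝ) : ℝ := ∫ u in (0 : ℝ)..t, haar i j u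

/-- The Schauder increments `Δ^{(i,j)}_{k,ℓ} = s^{(i,j)}(k/2^ℓ) - s^{(i,j)}((k-1)/2^ℓ)`. -/
noncomputable def schauderInc (i j k ℓ : ℕ) : ℝ :=
  schauder i j ((k : ℝ) / 2 ^ ℓ) - schauder i j (((k : ℝ) - 1) / 2 ^ ℓ)

/- ### Auxiliary lemmas -/

lemma vol_Ico_inter_Ioc (a b s t : ℝ) :
    volume (Set.Ico a b ∩ Set.Ioc s t) = ENNReal.ofReal (min b t - max a s) := by
  apply le_antisymm
  · calc volume (Set.Ico a b ∩ Set.Ioc s t) ≤ volume (Set.Icc (max a s) (min b t)) := by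
          apply measure_mono
          rintro x ⟨⟨h1, h2⟩, ⟨h3, h4⟩⟩
          exact ⟨max_le h1 h3.le, le_min h2.le h4⟩
      _ = ENNReal.ofReal (min b t - max a s) := Real.volume_Icc
  · calc ENNReal.ofReal (min b t - max a s) = volume (Set.Ioo (max a s) (min b t)) :=
          Real.volume_Ioo.symm
      _ ≤ _ := by
          apply measure_mono
          rintro x ⟨h1, h2⟩
          exact ⟨⟨le_trans (le_max_left _ _) h1.le, lt_of_lt_of_le h2 (min_le_left _ _)⟩,
            lt_of_le_of_lt (le_max_right _ _) h1, le_trans h2.le (min_le_right _ _)⟩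

lemma intInt_indIco (a b s t : ℝ) :
    IntervalIntegrable ((Set.Ico a b).indicator fun _ => (1 : ℝ)) volume s t := by
  have : Integrable ((Set.Ico a b).indicator fun _ => (1 : ℝ)) volume :=
    (integrable_indicator_iff measurableSet_Ico).2
      (integrableOn_const (by rw [Real.volume_Ico]; exact ENNReal.ofReal_ne_top))
  exact this.intervalIntegrable

lemma integral_indIco (a b s t : ℝ) (hst : s ≤ t) :
    ∫ u in s..t, (Set.Ico a b).indicator (fun _ => (1 : ℝ)) u = max (min b t - max a s) 0 := by
  rw [intervalIntegral.integral_of_le hst, setIntegral_indicator measurableSet_Ico,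
    setIntegral_const, measureReal_def, Set.inter_comm, vol_Ico_inter_Ioc, smul_eq_mul, mul_one]
  rcases le_total (min b t - max a s) 0 with h | h
  · rw [ENNReal.ofReal_eq_zero.2 h, ENNReal.toReal_zero, max_eq_right h]
  · rw [ENNReal.toReal_ofReal h, max_eq_left h]

lemma haar_succ (m j : ℕ) : haar (m+1) j = fun t =>
      2 ^ ((m : ℝ) / 2) *
        ((Set.Ico (((j : ℝ) - 1) / 2 ^ m) (((j : ℝ) - 1 / 2) / 2 ^ m)).indicator
            (fun _ => (1 : ℝ)) t
          - (Set.Ico (((j : ℝ) - 1 / 2) / 2 ^ m) ((j : ℝ) / 2 ^ m)).indicator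
            (fun _ => (1 : ℝ)) t) := rfl

lemma haar_intInt (m j : ℕ) (s t : ℝ) : IntervalIntegrable (haar (m+1) j) volume s t := by
  rw [haar_succ]
  exact ((intInt_indIco _ _ s t).sub (intInt_indIco _ _ s t)).const_mul _

lemma schauderInc_formula (m j k ℓ : ℕ) :
    schauderInc (m+1) j k ℓ =
      2 ^ ((m : ℝ) / 2) *
        (max (min (((j:ℝ) - 1/2)/2^m) ((k:ℝ)/2^ℓ) - max (((j:ℝ) - 1)/2^m) (((k:ℝ) - 1)/2^ℓ)) 0
         - max (min ((j:ℝ)/2^m) ((k:ℝ)/2^ℓ) - max (((j:ℝ) - 1/2)/2^m) (((k:ℝ) - 1)/2^ℓ)) 0) := by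
  have hst : ((k:ℝ) - 1)/2^ℓ ≤ (k:ℝ)/2^ℓ := by gcongr; linarith
  have key : schauderInc (m+1) j k ℓ
      = ∫ u in (((k:ℝ) - 1)/2^ℓ)..((k:ℝ)/2^ℓ), haar (m+1) j u := by
    rw [schauderInc, schauder, schauder]
    exact intervalIntegral.integral_interval_sub_left (haar_intInt m j 0 _) (haar_intInt m j 0 _)
  rw [key, haar_succ, intervalIntegral.integral_const_mul,
    intervalIntegral.integral_sub (intInt_indIco _ _ _ _) (intInt_indIco _ _ _ _),
    integral_indIco _ _ _ _ hst, integral_indIco _ _ _ _ hst]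

lemma rpow_half_sq (m : ℕ) : ((2:ℝ) ^ ((m:ℝ)/2))^2 = 2^m := by
  have h : ((2:ℝ) ^ ((m:ℝ)/2))^(2:ℕ) = (2:ℝ) ^ (((m:ℝ)/2) * ((2:ℕ):ℝ)) := by
    rw [← Real.rpow_natCast ((2:ℝ) ^ ((m:ℝ)/2)) 2, ← Real.rpow_mul (by norm_num)]
  rw [h]
  norm_num

lemma inc_eq_zero (m j k ℓ : ℕ)
    (h : (j:ℝ)/2^m ≤ ((k:ℝ) - 1)/2^ℓ ∨ (k:ℝ)/2^ℓ ≤ ((j:ℝ) - 1)/2^m) :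
    schauderInc (m+1) j k ℓ = 0 := by
  rw [schauderInc_formula]
  have hp : (0:ℝ) < (2:ℝ)^m := by positivity
  have hb1 : ((j:ℝ) - 1)/2^m ≤ ((j:ℝ) - 1/2)/2^m := by gcongr; linarith
  have hb2 : ((j:ℝ) - 1/2)/2^m ≤ (j:ℝ)/2^m := by gcongr; linarith
  have m1 : min (((j:ℝ) - 1/2)/2^m) ((k:ℝ)/2^ℓ) ≤ ((j:ℝ) - 1/2)/2^m := min_le_left _ _
  have m1' : min (((j:ℝ) - 1/2)/2^m) ((k:ℝ)/2^ℓ) ≤ (k:ℝ)/2^ℓ := min_le_right _ _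
  have m2 : min ((j:ℝ)/2^m) ((k:ℝ)/2^ℓ) ≤ (j:ℝ)/2^m := min_le_left _ _
  have m2' : min ((j:ℝ)/2^m) ((k:ℝ)/2^ℓ) ≤ (k:ℝ)/2^ℓ := min_le_right _ _
  have M1 : ((k:ℝ) - 1)/2^ℓ ≤ max (((j:ℝ) - 1)/2^m) (((k:ℝ) - 1)/2^ℓ) := le_max_right _ _
  have M1' : ((j:ℝ) - 1)/2^m ≤ max (((j:ℝ) - 1)/2^m) (((k:ℝ) - 1)/2^ℓ) := le_max_left _ _
  have M2 : ((k:ℝ) - 1)/2^ℓ ≤ max (((j:ℝ) - 1/2)/2^m) (((k:ℝ) - 1)/2^ℓ) := le_max_right _ _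
  have M2' : ((j:ℝ) - 1/2)/2^m ≤ max (((j:ℝ) - 1/2)/2^m) (((k:ℝ) - 1)/2^ℓ) := le_max_left _ _
  rcases h with h | h
  · rw [max_eq_right (by linarith), max_eq_right (by linarith), sub_self, mul_zero]
  · rw [max_eq_right (by linarith), max_eq_right (by linarith), sub_self, mul_zero]

lemma inc_sq_main (m j k ℓ : ℕ)
    (hst : ((k:ℝ) - 1)/2^ℓ ≤ (k:ℝ)/2^ℓ)
    (h : (((j:ℝ) - 1)/2^m ≤ ((k:ℝ) - 1)/2^ℓ ∧ (k:ℝ)/2^ℓ ≤ ((j:ℝ) - 1/2)/2^m)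
       ∨ (((j:ℝ) - 1/2)/2^m ≤ ((k:ℝ) - 1)/2^ℓ ∧ (k:ℝ)/2^ℓ ≤ (j:ℝ)/2^m)) :
    schauderInc (m+1) j k ℓ ^ 2 = 2^m / ((2:ℝ)^ℓ * 2^ℓ) := by
  have hl : (0:ℝ) < (2:ℝ)^ℓ := by positivity
  have hTS : (k:ℝ)/2^ℓ - ((k:ℝ) - 1)/2^ℓ = ((2:ℝ)^ℓ)⁻¹ := by
    field_simp
    ring
  rw [schauderInc_formula]
  have hval : max (min (((j:ℝ) - 1/2)/2^m) ((k:ℝ)/2^ℓ) - max (((j:ℝ) - 1)/2^m) (((k:ℝ) - 1)/2^ℓ)) 0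
         - max (min ((j:ℝ)/2^m) ((k:ℝ)/2^ℓ) - max (((j:ℝ) - 1/2)/2^m) (((k:ℝ) - 1)/2^ℓ)) 0
         = ((2:ℝ)^ℓ)⁻¹ ∨
       max (min (((j:ℝ) - 1/2)/2^m) ((k:ℝ)/2^ℓ) - max (((j:ℝ) - 1)/2^m) (((k:ℝ) - 1)/2^ℓ)) 0
         - max (min ((j:ℝ)/2^m) ((k:ℝ)/2^ℓ) - max (((j:ℝ) - 1/2)/2^m) (((k:ℝ) - 1)/2^ℓ)) 0
         = -((2:ℝ)^ℓ)⁻¹ := by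
    rcases h with ⟨h1, h2⟩ | ⟨h1, h2⟩
    · left
      have e1 : min (((j:ℝ) - 1/2)/2^m) ((k:ℝ)/2^ℓ) = (k:ℝ)/2^ℓ := min_eq_right h2
      have e2 : max (((j:ℝ) - 1)/2^m) (((k:ℝ) - 1)/2^ℓ) = ((k:ℝ) - 1)/2^ℓ := max_eq_right h1
      have e3 : max (min ((j:ℝ)/2^m) ((k:ℝ)/2^ℓ) - max (((j:ℝ) - 1/2)/2^m) (((k:ℝ) - 1)/2^ℓ)) 0
          = 0 := by
        apply max_eq_right
        have := min_le_right ((j:ℝ)/2^m) ((k:ℝ)/2^ℓ)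
        have := le_max_left (((j:ℝ) - 1/2)/2^m) (((k:ℝ) - 1)/2^ℓ)
        linarith
      rw [e1, e2, e3, max_eq_left (by linarith), sub_zero, hTS]
    · right
      have e1 : max (min (((j:ℝ) - 1/2)/2^m) ((k:ℝ)/2^ℓ) -
          max (((j:ℝ) - 1)/2^m) (((k:ℝ) - 1)/2^ℓ)) 0 = 0 := by
        apply max_eq_right
        have := min_le_left (((j:ℝ) - 1/2)/2^m) ((k:ℝ)/2^ℓ)
        have := le_max_right (((j:ℝ) - 1)/2^m) (((k:ℝ) - 1)/2^ℓ)
        linarith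
      have e2 : min ((j:ℝ)/2^m) ((k:ℝ)/2^ℓ) = (k:ℝ)/2^ℓ := min_eq_right h2
      have e3 : max (((j:ℝ) - 1/2)/2^m) (((k:ℝ) - 1)/2^ℓ) = ((k:ℝ) - 1)/2^ℓ := max_eq_right h1
      rw [e1, e2, e3, max_eq_left (by linarith), zero_sub, hTS]
  have hsq := rpow_half_sq m
  rcases hval with hv | hv <;> rw [hv] <;>
    · rw [mul_pow, hsq]
      field_simp

lemma sum_sq_level (m ℓ k : ℕ) (him : m + 1 ≤ ℓ) (hk1 : 1 ≤ k) (hk2 : k ≤ 2^ℓ) :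
    ∑ j ∈ Finset.Icc 1 (2^m), schauderInc (m+1) j k ℓ ^ 2 = 2^m / ((2:ℝ)^ℓ * 2^ℓ) := by
  set d := ℓ - (m+1) with hd
  set q := (k-1) / 2^d with hqdef
  set p := q / 2 with hpdef
  have h2d : 0 < 2^d := by positivity
  have hql : q * 2^d ≤ k - 1 := Nat.div_mul_le_self _ _
  have hkle : k ≤ (q+1) * 2^d := by
    have h1 : k - 1 < (q+1) * 2^d :=
      (Nat.div_lt_iff_lt_mul h2d).1 (Nat.lt_succ_self q)
    calc k = (k-1) + 1 := by omega
    _ ≤ (q+1) * 2^d := h1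
  have hq_lt : q < 2^(m+1) := by
    have hpow : 2^(m+1) * 2^d = 2^ℓ := by rw [← pow_add]; congr 1; omega
    have h1 : q * 2^d < 2^(m+1) * 2^d := by
      rw [hpow]; exact lt_of_le_of_lt hql (by omega)
    exact Nat.lt_of_mul_lt_mul_right h1
  have hp_lt : p < 2^m := by
    have h2 : 2^(m+1) = 2^m * 2 := by rw [pow_succ]
    omega
  have h2l : (0:ℝ) < 2^ℓ := by positivity
  have h2m1 : (0:ℝ) < 2^(m+1) := by positivity
  have h2m : (0:ℝ) < 2^m := by positivity
  have h2dR : (0:ℝ) < 2^d := by positivity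
  have hpowR : (2:ℝ)^ℓ = 2^(m+1) * 2^d := by rw [← pow_add]; congr 1; omega
  have hcast : ((k-1 : ℕ):ℝ) = (k:ℝ) - 1 := by
    rw [Nat.cast_sub hk1]; norm_num
  have hS : (q:ℝ)/2^(m+1) ≤ ((k:ℝ) - 1)/2^ℓ := by
    have h1 : (q:ℝ) * 2^d ≤ (k:ℝ) - 1 := by
      have h0 : ((q * 2^d : ℕ):ℝ) ≤ ((k-1:ℕ):ℝ) := Nat.cast_le.2 hql
      rw [hcast] at h0; push_cast at h0; linarith
    rw [div_le_div_iff₀ h2m1 h2l, hpowR]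
    nlinarith
  have hT : (k:ℝ)/2^ℓ ≤ ((q:ℝ)+1)/2^(m+1) := by
    have h1 : (k:ℝ) ≤ ((q:ℝ)+1) * 2^d := by
      have h0 : ((k:ℕ):ℝ) ≤ (((q+1) * 2^d : ℕ):ℝ) := Nat.cast_le.2 hkle
      push_cast at h0; linarith
    rw [div_le_div_iff₀ h2l h2m1, hpowR]
    nlinarith
  have hst : ((k:ℝ) - 1)/2^ℓ ≤ (k:ℝ)/2^ℓ := by gcongr; linarith
  have hqp : 2*p ≤ q ∧ q ≤ 2*p + 1 := by omega
  rw [Finset.sum_eq_single_of_mem (p+1)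
      (Finset.mem_Icc.2 ⟨by omega, by omega⟩)]
  · apply inc_sq_main m (p+1) k ℓ hst
    rcases Nat.even_or_odd q with ⟨r, hr⟩ | ⟨r, hr⟩
    · left
      have hq2p : (q:ℝ) = 2*(p:ℝ) := by
        have : q = 2*p := by omega
        exact_mod_cast this
      constructor
      · have e : (((p:ℝ)+1) - 1)/2^m = (q:ℝ)/2^(m+1) := by
          rw [hq2p, pow_succ]; ring
        push_cast
        rw [e]; exact hS
      · have e : (((p:ℝ)+1) - 1/2)/2^m = ((q:ℝ)+1)/2^(m+1) := by
          rw [hq2p, pow_succ]; ring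
        push_cast
        rw [e]; exact hT
    · right
      have hq2p : (q:ℝ) = 2*(p:ℝ) + 1 := by
        have : q = 2*p + 1 := by omega
        exact_mod_cast this
      constructor
      · have e : (((p:ℝ)+1) - 1/2)/2^m = (q:ℝ)/2^(m+1) := by
          rw [hq2p, pow_succ]; ring
        push_cast
        rw [e]; exact hS
      · have e : ((p:ℝ)+1)/2^m = ((q:ℝ)+1)/2^(m+1) := by
          rw [hq2p, pow_succ]; ring
        push_cast
        rw [e]; exact hT
  · intro j hj hne
    rw [Finset.mem_Icc] at hj
    have h0 : schauderInc (m+1) j k ℓ = 0 := by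
      apply inc_eq_zero
      rcases (by omega : j ≤ p ∨ p + 2 ≤ j) with hc | hc
      · left
        have hjq : 2*(j:ℝ) ≤ (q:ℝ) := by exact_mod_cast (by omega : 2*j ≤ q)
        have e : (j:ℝ)/2^m = (2*(j:ℝ))/2^(m+1) := by rw [pow_succ]; ring
        rw [e]
        refine le_trans ?_ hS
        gcongr
      · right
        have hjq : (q:ℝ) + 1 ≤ 2*((j:ℝ) - 1) := by
          have h1 : q + 1 ≤ 2*(j-1) := by omega
          have h2 := (Nat.cast_le (α := ℝ)).2 h1
          push_cast [Nat.cast_sub (by omega : 1 ≤ j)] at h2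
          linarith
        have e : ((j:ℝ) - 1)/2^m = (2*((j:ℝ)-1))/2^(m+1) := by rw [pow_succ]; ring
        rw [e]
        refine le_trans hT ?_
        gcongr
    rw [h0]
    norm_num

lemma geom_aux (n : ℕ) : ∑ i ∈ Finset.Icc 1 n, (2:ℝ)^(i-1) = 2^n - 1 := by
  induction n with
  | zero => simp
  | succ n ih =>
    rw [Finset.sum_Icc_succ_top (by omega), ih, Nat.add_sub_cancel, pow_succ]
    ring

/-- The squared Schauder increments sum to the dyadic step size `2^{-ℓ}`. -/
theorem squared_schauder_increments_sum (ℓ k : ℕ) (hk1 : 1 ≤ k) (hk2 : k ≤ 2 ^ ℓ) :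
    schauderInc 0 1 k ℓ ^ 2 +
      ∑ i ∈ Finset.Icc 1 ℓ, ∑ j ∈ Finset.Icc 1 (2 ^ (i - 1)), schauderInc i j k ℓ ^ 2 =
    ((2 : ℝ) ^ ℓ)⁻¹ := by
  have hp : (0:ℝ) < 2^ℓ := by positivity
  have h0 : schauderInc 0 1 k ℓ = ((2:ℝ)^ℓ)⁻¹ := by
    have h : haar 0 1 = fun _ => (1:ℝ) := rfl
    simp only [schauderInc, schauder, h, intervalIntegral.integral_const, smul_eq_mul, mul_one,
      sub_zero]
    field_simp
    ring
  have hlev : ∀ i ∈ Finset.Icc 1 ℓ, ∑ j ∈ Finset.Icc 1 (2^(i-1)), schauderInc i j k ℓ ^ 2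
      = (2:ℝ)^(i-1) / ((2:ℝ)^ℓ * 2^ℓ) := by
    intro i hi
    rw [Finset.mem_Icc] at hi
    obtain ⟨m, rfl⟩ : ∃ m, i = m + 1 := ⟨i - 1, by omega⟩
    simp only [Nat.add_sub_cancel]
    exact sum_sq_level m ℓ k (by omega) hk1 hk2
  rw [h0, Finset.sum_congr rfl hlev, ← Finset.sum_div]
  rw [geom_aux ℓ]
  field_simp
  ring
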